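/- In particular, for X = L²(ℝ, e^{-t²} dt) and every nonzero real polynomial p of degree at most n, ‖p'‖_X ≤ √(2n) ‖p‖_X, with equality iff p is a nonzero scalar multiple of the Hermite polynomial H_n. -/

import Mathlib

open MeasureTheory Polynomial

/-- Physicists' Hermite polynomials. -/
noncomputable def physHermite : ℕ → Polynomial ℝ
  | 0 => 1
  | 1 => C (2 : ℝ) * X
  | (n + 2) => C (2 : ℝ) * X * physHermite (n + 1) - C (2 * (n + 1) : ℝ) * physHermite n

/-- The `L²(ℝ, e^{-t²} dt)` norm of a polynomial. -/
noncomputable def hermiteNorm (p : Polynomial ℝ) : ℝ :=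
  Real.sqrt (∫ t : ℝ, (p.eval t) ^ 2 * Real.exp (-t ^ 2))

lemma integrable_pow_gauss (k : ℕ) :
    Integrable fun t : ℝ => t ^ k * Real.exp (-t ^ 2) := by
  have h := integrable_rpow_mul_exp_neg_mul_sq (b := 1) one_pos (s := k)
    (lt_of_lt_of_le neg_one_lt_zero (Nat.cast_nonneg k))
  simpa [Real.rpow_natCast] using h

lemma integrable_poly_gauss (p : Polynomial ℝ) :
    Integrable fun t : ℝ => p.eval t * Real.exp (-t ^ 2) := by
  have : (fun t : ℝ => p.eval t * Real.exp (-t ^ 2)) =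
      fun t : ℝ => ∑ k ∈ Finset.range (p.natDegree + 1),
        p.coeff k * (t ^ k * Real.exp (-t ^ 2)) := by
    funext t
    simp_rw [← mul_assoc, ← Finset.sum_mul]
    rw [← p.eval_eq_sum_range]
  rw [this]
  exact integrable_finset_sum _ fun k _ => (integrable_pow_gauss k).const_mul _

noncomputable def GI (p : Polynomial ℝ) : ℝ := ∫ t : ℝ, p.eval t * Real.exp (-t ^ 2)

lemma GI_add (p q : Polynomial ℝ) : GI (p + q) = GI p + GI q := by
  unfold GI
  simp_rw [eval_add, add_mul]
  exact integral_add (integrable_poly_gauss p) (integrable_poly_gauss q)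

lemma GI_Cmul (a : ℝ) (p : Polynomial ℝ) : GI (C a * p) = a * GI p := by
  unfold GI
  simp_rw [eval_mul, eval_C, mul_assoc]
  exact integral_const_mul a _

lemma GI_sum {ι : Type*} (s : Finset ι) (f : ι → Polynomial ℝ) :
    GI (∑ i ∈ s, f i) = ∑ i ∈ s, GI (f i) := by
  unfold GI
  simp_rw [eval_finset_sum, Finset.sum_mul]
  exact integral_finset_sum s fun i _ => integrable_poly_gauss (f i)

lemma GI_zero : GI 0 = 0 := by simp [GI]

lemma GI_deriv_sub (q : Polynomial ℝ) : GI (derivative q - C 2 * X * q) = 0 := by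
  unfold GI
  have hd : ∀ t : ℝ, HasDerivAt (fun t : ℝ => q.eval t * Real.exp (-t ^ 2))
      ((derivative q - C 2 * X * q).eval t * Real.exp (-t ^ 2)) t := by
    intro t
    have h1 : HasDerivAt (fun t : ℝ => q.eval t) (q.derivative.eval t) t := q.hasDerivAt t
    have h2 : HasDerivAt (fun t : ℝ => Real.exp (-t ^ 2)) ((-2 * t) * Real.exp (-t ^ 2)) t := by
      have : HasDerivAt (fun t : ℝ => -t ^ 2) (-2 * t) t := by
        simpa using ((hasDerivAt_pow 2 t).fun_neg)
      simpa [mul_comm] using this.exp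
    refine (h1.fun_mul h2).congr_deriv ?_
    simp [eval_mul, eval_sub]
    ring
  have := integral_eq_zero_of_hasDerivAt_of_integrable hd
    (integrable_poly_gauss _) (integrable_poly_gauss q)
  exact this

lemma physHermite_rec (m : ℕ) :
    physHermite (m + 1) = C 2 * X * physHermite m - C (2 * m : ℝ) * physHermite (m - 1) := by
  match m with
  | 0 => simp [physHermite]
  | (k + 1) => push_cast [physHermite]; ring

lemma deriv_physHermite (n : ℕ) :
    derivative (physHermite n) = C (2 * n : ℝ) * physHermite (n - 1) := by
  induction n using Nat.strong_induction_on with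
  | _ n ih =>
    match n with
    | 0 => simp [physHermite]
    | 1 => simp [physHermite]
    | (m + 2) =>
      have h1 := ih (m + 1) (by omega)
      have h2 := ih m (by omega)
      rw [show physHermite (m+2) = C (2:ℝ) * X * physHermite (m + 1)
          - C (2 * (m + 1) : ℝ) * physHermite m from rfl]
      rw [derivative_sub, derivative_mul, derivative_mul, derivative_mul, h1, h2]
      simp only [derivative_C, derivative_X, Nat.add_sub_cancel]
      rw [show (m + 2 : ℕ) - 1 = m + 1 from rfl, physHermite_rec m]
      simp only [Nat.cast_add, Nat.cast_one, Nat.cast_ofNat, mul_add, mul_one, C_add, C_mul, map_ofNat]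
      ring

lemma natDegree_physHermite_le (n : ℕ) : (physHermite n).natDegree ≤ n := by
  induction n using Nat.strong_induction_on with
  | _ n ih =>
    match n with
    | 0 => simp [physHermite]
    | 1 => exact (natDegree_mul_le).trans (by simp)
    | (m + 2) =>
      have h1 := ih (m+1) (by omega)
      have h2 := ih m (by omega)
      have hx : (C (2:ℝ) * X).natDegree ≤ 1 := natDegree_mul_le.trans (by simp)
      have hc : (C (2 * (m+1) : ℝ)).natDegree = 0 := natDegree_C _
      refine (natDegree_sub_le _ _).trans (max_le ?_ ?_)
      · exact natDegree_mul_le.trans (by omega)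
      · exact natDegree_mul_le.trans (by omega)

lemma coeff_physHermite (n : ℕ) : (physHermite n).coeff n = 2 ^ n := by
  induction n using Nat.strong_induction_on with
  | _ n ih =>
    match n with
    | 0 => simp [physHermite]
    | 1 => simp [physHermite]
    | (m + 2) =>
      have h0 : (physHermite m).coeff (m + 2) = 0 :=
        coeff_eq_zero_of_natDegree_lt (lt_of_le_of_lt (natDegree_physHermite_le m) (by omega))
      rw [show physHermite (m+2) = C (2:ℝ) * X * physHermite (m + 1)
          - C (2 * (m + 1) : ℝ) * physHermite m from rfl]
      rw [coeff_sub, mul_assoc, coeff_C_mul, coeff_C_mul, coeff_X_mul, ih (m+1) (by omega), h0]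
      ring

lemma iterate_deriv_physHermite (n : ℕ) :
    derivative^[n] (physHermite n) = C ((2:ℝ) ^ n * n.factorial) := by
  induction n with
  | zero => simp [physHermite]
  | succ m ih =>
    rw [Function.iterate_succ_apply, deriv_physHermite, Nat.add_sub_cancel,
      iterate_derivative_C_mul, ih, ← C_mul]
    congr 1
    push_cast [Nat.factorial_succ]
    ring

lemma GI_sub (p q : Polynomial ℝ) : GI (p - q) = GI p - GI q := by
  have := GI_add (p - q) q
  simp at this; linarith

lemma GI_C (a : ℝ) : GI (C a) = a * Real.sqrt Real.pi := by
  have h := integral_gaussian 1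
  simp only [one_mul, neg_mul, div_one] at h
  rw [show C a = C a * 1 from (mul_one _).symm, GI_Cmul]
  congr 1
  simpa [GI] using h

lemma physHermite_succ_eq (n : ℕ) :
    physHermite (n + 1) = C 2 * X * physHermite n - derivative (physHermite n) := by
  rw [physHermite_rec, deriv_physHermite]

lemma GI_mul_physHermite_step (p : Polynomial ℝ) (n : ℕ) :
    GI (p * physHermite (n + 1)) = GI (derivative p * physHermite n) := by
  have key : p * physHermite (n + 1) = derivative p * physHermite n -
      (derivative (p * physHermite n) - C 2 * X * (p * physHermite n)) := by
    rw [physHermite_succ_eq, derivative_mul]; ring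
  rw [key, GI_sub, GI_deriv_sub, sub_zero]

lemma GI_mul_physHermite (p : Polynomial ℝ) (n : ℕ) :
    GI (p * physHermite n) = GI (derivative^[n] p) := by
  induction n generalizing p with
  | zero => simp [physHermite]
  | succ m ih => rw [GI_mul_physHermite_step, ih, ← Function.iterate_succ_apply]

lemma GI_HH_lt {j k : ℕ} (h : j < k) : GI (physHermite j * physHermite k) = 0 := by
  rw [GI_mul_physHermite, iterate_derivative_eq_zero (lt_of_le_of_lt (natDegree_physHermite_le j) h),
    GI_zero]

lemma GI_HH_ne {j k : ℕ} (h : j ≠ k) : GI (physHermite j * physHermite k) = 0 := by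
  rcases h.lt_or_gt with h | h
  · exact GI_HH_lt h
  · rw [mul_comm]; exact GI_HH_lt h

lemma GI_HH_self (n : ℕ) :
    GI (physHermite n * physHermite n) = 2 ^ n * n.factorial * Real.sqrt Real.pi := by
  rw [GI_mul_physHermite, iterate_deriv_physHermite, GI_C]

noncomputable def NN (k : ℕ) : ℝ := 2 ^ k * k.factorial * Real.sqrt Real.pi

lemma NN_pos (k : ℕ) : 0 < NN k := by
  have : (0:ℝ) < Real.sqrt Real.pi := Real.sqrt_pos.mpr Real.pi_pos
  have h2 : (0:ℝ) < k.factorial := by exact_mod_cast k.factorial_pos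
  exact mul_pos (mul_pos (by positivity) h2) this

lemma GI_bilin (s : Finset ℕ) (a b : ℕ → ℝ) (f g : ℕ → ℕ) :
    GI ((∑ k ∈ s, C (a k) * physHermite (f k)) * (∑ l ∈ s, C (b l) * physHermite (g l))) =
      ∑ k ∈ s, ∑ l ∈ s, a k * b l * GI (physHermite (f k) * physHermite (g l)) := by
  rw [Finset.sum_mul_sum, GI_sum]
  refine Finset.sum_congr rfl fun k _ => ?_
  rw [GI_sum]
  refine Finset.sum_congr rfl fun l _ => ?_
  rw [show C (a k) * physHermite (f k) * (C (b l) * physHermite (g l)) =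
    C (a k) * (C (b l) * (physHermite (f k) * physHermite (g l))) by ring, GI_Cmul, GI_Cmul]
  ring

lemma GI_sq (n : ℕ) (c : ℕ → ℝ) :
    GI ((∑ k ∈ Finset.range (n + 1), C (c k) * physHermite k) *
        (∑ l ∈ Finset.range (n + 1), C (c l) * physHermite l)) =
      ∑ k ∈ Finset.range (n + 1), c k ^ 2 * NN k := by
  have h := GI_bilin (Finset.range (n + 1)) c c id id
  simp only [id_eq] at h
  rw [h]
  refine Finset.sum_congr rfl fun k hk => ?_
  rw [Finset.sum_eq_single k]
  · rw [GI_HH_self]; unfold NN; ring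
  · intro l _ hlk
    rw [GI_HH_ne (Ne.symm hlk)]; ring
  · intro h; exact absurd hk h

lemma deriv_sum_rep (n : ℕ) (c : ℕ → ℝ) :
    derivative (∑ k ∈ Finset.range (n + 1), C (c k) * physHermite k) =
      ∑ k ∈ Finset.range (n + 1), C (c k * (2 * k)) * physHermite (k - 1) := by
  rw [derivative_sum]
  refine Finset.sum_congr rfl fun k _ => ?_
  rw [derivative_mul, derivative_C, deriv_physHermite]
  simp only [C_mul]
  ring

lemma GI_dsq (n : ℕ) (c : ℕ → ℝ) :
    GI (derivative (∑ k ∈ Finset.range (n + 1), C (c k) * physHermite k) *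
        derivative (∑ l ∈ Finset.range (n + 1), C (c l) * physHermite l)) =
      ∑ k ∈ Finset.range (n + 1), 2 * k * (c k ^ 2 * NN k) := by
  rw [deriv_sum_rep, GI_bilin]
  refine Finset.sum_congr rfl fun k hk => ?_
  rw [Finset.sum_eq_single k]
  · rcases Nat.eq_zero_or_pos k with rfl | hk0
    · simp
    · rw [GI_HH_self]
      unfold NN
      obtain ⟨m, rfl⟩ := Nat.exists_eq_add_of_le hk0
      simp only [Nat.add_sub_cancel_left, pow_succ, Nat.factorial_succ, Nat.add_comm 1 m]
      push_cast [Nat.factorial_succ]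
      ring
  · intro l hl hlk
    rcases Nat.eq_zero_or_pos k with rfl | hk0
    · push_cast; ring
    · rcases Nat.eq_zero_or_pos l with rfl | hl0
      · push_cast; ring
      · rw [GI_HH_ne (show k - 1 ≠ l - 1 by omega)]; ring
  · intro h; exact absurd hk h

lemma exists_rep (n : ℕ) (p : Polynomial ℝ) (h : p.natDegree ≤ n) :
    ∃ c : ℕ → ℝ, p = ∑ k ∈ Finset.range (n + 1), C (c k) * physHermite k := by
  induction n generalizing p with
  | zero =>
    refine ⟨fun _ => p.coeff 0, ?_⟩
    rw [Finset.sum_range_one, show physHermite 0 = 1 from rfl, mul_one]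
    exact Polynomial.eq_C_of_natDegree_le_zero h
  | succ n ih =>
    set a := p.coeff (n + 1) / 2 ^ (n + 1) with ha
    set q := p - C a * physHermite (n + 1) with hq
    have hqdeg : q.natDegree ≤ n := by
      rw [Polynomial.natDegree_le_iff_coeff_eq_zero]
      intro m hm
      rcases eq_or_lt_of_le (Nat.succ_le_of_lt hm) with hm1 | hm1
      · rw [hq, coeff_sub, coeff_C_mul, ← hm1, coeff_physHermite, ha]
        field_simp
        ring
      · rw [hq, coeff_sub, coeff_C_mul,
          coeff_eq_zero_of_natDegree_lt (lt_of_le_of_lt h hm1),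
          coeff_eq_zero_of_natDegree_lt (lt_of_le_of_lt (natDegree_physHermite_le (n+1)) hm1)]
        ring
    obtain ⟨c', hc'⟩ := ih q hqdeg
    refine ⟨fun k => if k = n + 1 then a else c' k, ?_⟩
    rw [Finset.sum_range_succ]
    beta_reduce
    rw [if_pos rfl]
    have : ∑ k ∈ Finset.range (n + 1), C (if k = n + 1 then a else c' k) * physHermite k
        = ∑ k ∈ Finset.range (n + 1), C (c' k) * physHermite k := by
      refine Finset.sum_congr rfl fun k hk => ?_
      rw [if_neg (by simp at hk; omega)]
    rw [this, ← hc', hq]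
    ring

lemma hermiteNorm_eq (q : Polynomial ℝ) : hermiteNorm q = Real.sqrt (GI (q * q)) := by
  unfold hermiteNorm GI
  congr 1
  refine integral_congr_ae (Filter.Eventually.of_forall fun t => ?_)
  simp [sq]

theorem schmidt_first_derivative (n : ℕ) (p : Polynomial ℝ) (hp : p ≠ 0)
    (hdeg : p.natDegree ≤ n) :
    hermiteNorm p.derivative ≤ Real.sqrt (2 * n) * hermiteNorm p ∧
    (hermiteNorm p.derivative = Real.sqrt (2 * n) * hermiteNorm p ↔
      ∃ c : ℝ, c ≠ 0 ∧ p = c • physHermite n) := by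
  obtain ⟨c, hc⟩ := exists_rep n p hdeg
  set B := GI (p * p) with hB
  set A := GI (derivative p * derivative p) with hA
  have hBsum : B = ∑ k ∈ Finset.range (n + 1), c k ^ 2 * NN k := by
    rw [hB, hc, GI_sq]
  have hAsum : A = ∑ k ∈ Finset.range (n + 1), 2 * k * (c k ^ 2 * NN k) := by
    rw [hA, hc, GI_dsq]
  have hBnn : 0 ≤ B := by
    rw [hBsum]
    exact Finset.sum_nonneg fun k _ => mul_nonneg (sq_nonneg _) (NN_pos k).le
  have hAnn : 0 ≤ A := by
    rw [hAsum]
    exact Finset.sum_nonneg fun k _ =>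
      mul_nonneg (by positivity) (mul_nonneg (sq_nonneg _) (NN_pos k).le)
  have hdiff : 2 * n * B - A = ∑ k ∈ Finset.range (n + 1),
      (2 * n - 2 * k) * (c k ^ 2 * NN k) := by
    rw [hBsum, hAsum, Finset.mul_sum, ← Finset.sum_sub_distrib]
    exact Finset.sum_congr rfl fun k _ => by ring
  have hle : A ≤ 2 * n * B := by
    rw [← sub_nonneg, hdiff]
    refine Finset.sum_nonneg fun k hk => ?_
    have : k ≤ n := by simpa [Nat.lt_succ_iff] using hk
    refine mul_nonneg (by rify at this; linarith)
      (mul_nonneg (sq_nonneg _) (NN_pos k).le)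
  have hnorm1 : hermiteNorm p.derivative = Real.sqrt A := hermiteNorm_eq _
  have hnorm2 : Real.sqrt (2 * n) * hermiteNorm p = Real.sqrt (2 * n * B) := by
    rw [hermiteNorm_eq, ← Real.sqrt_mul (by positivity), hB]
  constructor
  · rw [hnorm1, hnorm2]
    exact Real.sqrt_le_sqrt hle
  · rw [hnorm1, hnorm2, Real.sqrt_inj hAnn (by positivity)]
    constructor
    · intro heq
      have hzero : ∀ k ∈ Finset.range (n + 1),
          (2 * (n:ℝ) - 2 * k) * (c k ^ 2 * NN k) = 0 := by
        rw [← Finset.sum_eq_zero_iff_of_nonneg]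
        · rw [← hdiff, heq]; ring
        · intro k hk
          have : k ≤ n := by simpa [Nat.lt_succ_iff] using hk
          exact mul_nonneg (by rify at this; linarith)
            (mul_nonneg (sq_nonneg _) (NN_pos k).le)
      have hck : ∀ k < n, c k = 0 := by
        intro k hkn
        have h0 := hzero k (Finset.mem_range.mpr (by omega))
        have h1 : (2 * (n:ℝ) - 2 * k) > 0 := by rify at hkn; linarith
        have h2 := NN_pos k
        have := mul_eq_zero.mp h0
        rcases this with h | h
        · linarith
        · rcases mul_eq_zero.mp h with h | h
          · exact pow_eq_zero_iff (by norm_num) |>.mp h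
          · linarith
      refine ⟨c n, ?_, ?_⟩
      · intro hcn
        apply hp
        rw [hc]
        refine Finset.sum_eq_zero fun k hk => ?_
        rcases eq_or_lt_of_le (Nat.lt_succ_iff.mp (Finset.mem_range.mp hk)) with rfl | hk2
        · rw [hcn]; simp
        · rw [hck k hk2]; simp
      · rw [hc, Finset.sum_range_succ, smul_eq_C_mul]
        rw [Finset.sum_eq_zero fun k hk => by
          rw [hck k (Finset.mem_range.mp hk)]; simp]
        rw [zero_add]
    · rintro ⟨d, hd, rfl⟩
      set c' : ℕ → ℝ := fun k => if k = n then d else 0 with hc'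
      have hrep : d • physHermite n = ∑ k ∈ Finset.range (n + 1), C (c' k) * physHermite k := by
        rw [Finset.sum_eq_single n]
        · rw [hc']; simp [smul_eq_C_mul]
        · intro l _ hl; rw [hc']; simp [hl]
        · intro h; exact absurd (Finset.self_mem_range_succ n) h
      have hA' : A = 2 * n * (d ^ 2 * NN n) := by
        rw [hA, hrep, GI_dsq, Finset.sum_eq_single n]
        · simp [hc']
        · intro l _ hl; simp [hc', hl]
        · intro h; exact absurd (Finset.self_mem_range_succ n) h
      have hB' : B = d ^ 2 * NN n := by
        rw [hB, hrep, GI_sq, Finset.sum_eq_single n]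
        · simp [hc']
        · intro l _ hl; simp [hc', hl]
        · intro h; exact absurd (Finset.self_mem_range_succ n) h
      rw [hA', hB']
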